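/- For a horizontal strip λ/μ with |λ| = n, the statistic eig(λ/μ) satisfies eig(λ/μ) ≤ n², with equality if and only if λ = (n) is the one-row partition and μ is the empty partition. -/

import Mathlib

/-- The diagonal index of a set of cells `(i, j)` (0-indexed rows and
columns, so the cell in row `i`, column `j` has diagonal index `j - i`,
agreeing with the 1-indexed convention). -/
def diagS (s : Finset (ℕ × ℕ)) : ℤ := ∑ c ∈ s, ((c.2 : ℤ) - (c.1 : ℤ))

/-- The skew diagram `λ/μ` is a horizontal strip: no two cells in the same column. -/
def IsHorizontalStrip (l m : YoungDiagram) : Prop :=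
  ∀ c1 ∈ l.cells \ m.cells, ∀ c2 ∈ l.cells \ m.cells, c1.2 = c2.2 → c1 = c2

/-- The statistic `eig(λ/μ) = C(|λ|+1,2) − C(|μ|+1,2) + diag(λ/μ)`. -/
def eigS (l m : YoungDiagram) : ℤ :=
  ((l.card + 1).choose 2 : ℤ) - ((m.card + 1).choose 2 : ℤ) + diagS (l.cells \ m.cells)

/-- The one-row Young diagram with `n` boxes. -/
def rowDiagram (n : ℕ) : YoungDiagram :=
  YoungDiagram.ofRowLens [n] (List.sortedGE_iff_pairwise.mpr (List.pairwise_singleton _ n))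

/-- The one-column Young diagram `1^n`. -/
def colDiagram (n : ℕ) : YoungDiagram :=
  YoungDiagram.ofRowLens (List.replicate n 1) (by
    induction n with
    | zero => simp [List.sortedGE_iff_pairwise]
    | succ k ih =>
      rw [List.replicate_succ, List.sortedGE_iff_pairwise, List.pairwise_cons]
      exact ⟨fun b hb => by simp [List.eq_of_mem_replicate hb], List.sortedGE_iff_pairwise.mp ih⟩)

lemma two_choose_two (a : ℕ) : 2 * ((a + 1).choose 2 : ℤ) = a * (a + 1) := by
  have : ∀ b : ℕ, 2 * (b + 1).choose 2 = b * (b + 1) := by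
    intro b
    induction b with
    | zero => rfl
    | succ c ih =>
      rw [Nat.choose_succ_succ (c + 1) 1, Nat.choose_one_right, Nat.mul_add, ih]
      ring
  exact_mod_cast this a

lemma gauss_sum_int (n : ℕ) : 2 * ∑ j ∈ Finset.range n, (j : ℤ) = n * (n - 1) := by
  induction n with
  | zero => simp
  | succ c ih =>
    rw [Finset.sum_range_succ, Nat.cast_succ]
    rw [mul_add, ih]
    ring

lemma sum_bound (n : ℕ) (T : Finset ℕ) (hT : T ⊆ Finset.range n) :
    2 * ∑ j ∈ T, (j : ℤ) ≤ T.card * (2 * n - T.card - 1) := by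
  induction n generalizing T with
  | zero =>
    have : T = ∅ := Finset.subset_empty.mp (by simpa using hT)
    subst this; simp
  | succ c ih =>
    by_cases hc : c ∈ T
    · have hT' : T.erase c ⊆ Finset.range c := by
        intro x hx
        have hx1 : x ∈ T := Finset.mem_of_mem_erase hx
        have hx2 : x ≠ c := Finset.ne_of_mem_erase hx
        have := Finset.mem_range.mp (hT hx1)
        exact Finset.mem_range.mpr (by omega)
      have hsum : ∑ j ∈ T, (j : ℤ) = c + ∑ j ∈ T.erase c, (j : ℤ) :=
        (Finset.add_sum_erase _ _ hc).symm
      have hcard : T.card = (T.erase c).card + 1 := by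
        rw [Finset.card_erase_of_mem hc]
        have : 0 < T.card := Finset.card_pos.mpr ⟨c, hc⟩
        omega
      have := ih (T.erase c) hT'
      rw [hsum, hcard]
      push_cast
      nlinarith [this]
    · have hT' : T ⊆ Finset.range c := by
        intro x hx
        have := Finset.mem_range.mp (hT hx)
        have : x ≠ c := fun h => hc (h ▸ hx)
        exact Finset.mem_range.mpr (by omega)
      have h1 := ih T hT'
      have h2 : (T.card : ℤ) ≥ 0 := Int.natCast_nonneg _
      push_cast at h1 ⊢
      nlinarith

lemma mem_rowDiagram {n : ℕ} {c : ℕ × ℕ} :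
    c ∈ (rowDiagram n).cells ↔ c.1 = 0 ∧ c.2 < n := by
  rw [rowDiagram, YoungDiagram.mem_cells, YoungDiagram.mem_ofRowLens]
  constructor
  · rintro ⟨h1, h2⟩
    simp only [List.length_singleton] at h1
    interval_cases h : c.1
    · simpa using h2
  · rintro ⟨h1, h2⟩
    refine ⟨by simp [h1], ?_⟩
    simp [h1, h2]

lemma rowDiagram_cells (n : ℕ) : (rowDiagram n).cells = {0} ×ˢ Finset.range n := by
  ext c
  rw [mem_rowDiagram, Finset.mem_product, Finset.mem_singleton, Finset.mem_range]

set_option maxHeartbeats 2000000 in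
/-- For a horizontal strip `λ/μ` with `|λ| = n`, we have `eig(λ/μ) ≤ n²`,
with equality iff `λ` is the one-row partition `(n)` and `μ` is empty. -/
theorem eig_le_sq (n : ℕ) (l m : YoungDiagram) (hml : m ≤ l) (hn : l.card = n)
    (hs : IsHorizontalStrip l m) :
    eigS l m ≤ (n : ℤ) ^ 2 ∧
      (eigS l m = (n : ℤ) ^ 2 ↔ l = rowDiagram n ∧ m = ⊥) := by
  set k := m.card with hk_def
  set s := l.cells \ m.cells with hs_def
  have hsub : m.cells ⊆ l.cells := YoungDiagram.cells_subset_iff.mpr hml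
  have hk : k ≤ n := hn ▸ Finset.card_le_card hsub
  have hn' : l.cells.card = n := hn
  have hk' : m.cells.card = k := rfl
  have hcard_s : s.card = n - k := by
    rw [hs_def, Finset.card_sdiff_of_subset hsub, hn', hk']
  -- every column index in the strip is < n
  have hj_lt : ∀ c ∈ s, c.2 < n := by
    intro c hc
    have hcl : c ∈ l.cells := (Finset.mem_sdiff.mp hc).1
    have h1 : c.2 < l.rowLen c.1 := by
      rw [← YoungDiagram.mem_iff_lt_rowLen]
      simpa using hcl
    have h2 : l.rowLen c.1 ≤ l.card := by
      rw [YoungDiagram.rowLen_eq_card]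
      exact Finset.card_le_card (Finset.filter_subset _ _)
    omega
  set T := s.image Prod.snd with hT_def
  have hTcard : T.card = s.card :=
    Finset.card_image_of_injOn (fun c1 h1 c2 h2 h => hs c1 h1 c2 h2 h)
  have hTsub : T ⊆ Finset.range n := by
    intro j hj
    obtain ⟨c, hc, rfl⟩ := Finset.mem_image.mp hj
    exact Finset.mem_range.mpr (hj_lt c hc)
  have hsum_eq : ∑ j ∈ T, (j : ℤ) = ∑ c ∈ s, (c.2 : ℤ) :=
    Finset.sum_image (fun c1 h1 c2 h2 h => hs c1 h1 c2 h2 h)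
  have hdiag_split : diagS s = ∑ c ∈ s, (c.2 : ℤ) - ∑ c ∈ s, (c.1 : ℤ) := by
    rw [diagS, Finset.sum_sub_distrib]
  have hrow_nonneg : 0 ≤ ∑ c ∈ s, ((c.1 : ℤ)) :=
    Finset.sum_nonneg (fun c _ => Int.natCast_nonneg _)
  have hdiag_le : diagS s ≤ ∑ c ∈ s, (c.2 : ℤ) := by
    rw [hdiag_split]; linarith
  have hB := sum_bound n T hTsub
  rw [hTcard, hcard_s] at hB
  have hcast : ((n - k : ℕ) : ℤ) = (n : ℤ) - k := by
    push_cast [Nat.cast_sub hk]; ring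
  rw [hcast] at hB
  have heig : eigS l m = ((n + 1).choose 2 : ℤ) - ((k + 1).choose 2 : ℤ) + diagS s := by
    rw [eigS, hn, hk_def]
  have hc1 := two_choose_two n
  have hc2 := two_choose_two k
  -- main inequality, doubled
  have hkey : 2 * eigS l m ≤ 2 * (n : ℤ) ^ 2 - 2 * (k : ℤ) ^ 2 := by
    rw [heig]
    rw [← hsum_eq] at hdiag_le
    nlinarith [hdiag_le, hB, hc1, hc2]
  have hknn : (0 : ℤ) ≤ (k : ℤ) := Int.natCast_nonneg _
  constructor
  · nlinarith [sq_nonneg (k : ℤ)]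
  constructor
  · -- equality implies λ = (n), μ = ⊥
    intro heq
    have hk0 : k = 0 := by
      have : (k : ℤ) ^ 2 ≤ 0 := by linarith [hkey, heq]
      have : (k : ℤ) = 0 := by nlinarith
      exact_mod_cast this
    have hm_bot : m = ⊥ := by
      ext c
      have : m.cells = ∅ := Finset.card_eq_zero.mp hk0
      simp [← YoungDiagram.mem_cells, this, YoungDiagram.cells_bot]
    -- T = range n
    have hTcard' : T.card = n := by rw [hTcard, hcard_s, hk0]; omega
    have hT_eq : T = Finset.range n := by
      apply Finset.eq_of_subset_of_card_le hTsub
      rw [hTcard', Finset.card_range]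
    have hsumT : 2 * ∑ j ∈ T, (j : ℤ) = n * (n - 1) := by
      rw [hT_eq]; exact gauss_sum_int n
    -- all rows are zero
    have hrow0 : ∑ c ∈ s, ((c.1 : ℤ)) = 0 := by
      rw [heig] at heq
      rw [← hsum_eq] at hdiag_split
      have hk0' : ((k + 1).choose 2 : ℤ) = 0 := by rw [hk0]; simp
      nlinarith [heq, hdiag_split, hsumT, hc1]
    have hrow0' : ∀ c ∈ s, c.1 = 0 := by
      intro c hc
      have := (Finset.sum_eq_zero_iff_of_nonneg
        (fun c _ => Int.natCast_nonneg c.1)).mp hrow0 c hc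
      exact_mod_cast this
    -- l = rowDiagram n
    have hs_eq : s = l.cells := by
      rw [hs_def]
      have : m.cells = ∅ := Finset.card_eq_zero.mp hk0
      rw [this, Finset.sdiff_empty]
    have hsubR : l.cells ⊆ (rowDiagram n).cells := by
      intro c hc
      rw [mem_rowDiagram]
      exact ⟨hrow0' c (hs_eq ▸ hc), hj_lt c (hs_eq ▸ hc)⟩
    have hRcard : (rowDiagram n).cells.card = n := by
      rw [rowDiagram_cells]
      simp
    have hl_eq : l = rowDiagram n := by
      ext c
      have : l.cells = (rowDiagram n).cells := by
        apply Finset.eq_of_subset_of_card_le hsubR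
        rw [hRcard, hn']
      simp [← YoungDiagram.mem_cells, this]
    exact ⟨hl_eq, hm_bot⟩
  · -- converse
    rintro ⟨hl, hm⟩
    have hmc : m.cells = ∅ := by rw [hm]; exact YoungDiagram.cells_bot
    have hs_eq : s = ({0} ×ˢ Finset.range n : Finset (ℕ × ℕ)) := by
      rw [hs_def, hmc, Finset.sdiff_empty, hl, rowDiagram_cells]
    have hkc : k = 0 := by
      rw [← hk', hm, YoungDiagram.cells_bot]; rfl
    have hdiag : diagS s = ∑ j ∈ Finset.range n, (j : ℤ) := by
      rw [hs_eq, diagS, Finset.sum_product]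
      simp
    have hg := gauss_sum_int n
    have h2 : 2 * eigS l m = 2 * (n : ℤ) ^ 2 := by
      rw [heig, hdiag, hkc]
      have h0 : (((0 : ℕ) + 1).choose 2 : ℤ) = 0 := by norm_num
      rw [h0]
      linarith [hc1, hg]
    linarith
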